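/- Weak (Cautious) Monotonicity: if L_α = L_β, σ ⊢_k α and σ ⊢_k β, then σ * α ⊢_k β. -/

import Mathlib

namespace BeliefSeq

/-- Propositional formulas over a type `ν` of propositional variables,
with connectives ¬, ∧, ∨, →, ↔ and constants true, false. -/
inductive PropForm (ν : Type) : Type where
  | var : ν → PropForm ν
  | tru : PropForm ν
  | fls : PropForm ν
  | neg : PropForm ν → PropForm ν
  | conj : PropForm ν → PropForm ν → PropForm ν
  | disj : PropForm ν → PropForm ν → PropForm ν
  | impl : PropForm ν → PropForm ν → PropForm ν
  | biim : PropForm ν → PropForm ν → PropForm ν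

namespace PropForm

variable {ν : Type}

/-- Classical (two-valued) evaluation of a formula under a valuation. -/
def eval (v : ν → Bool) : PropForm ν → Bool
  | var x => v x
  | tru => true
  | fls => false
  | neg φ => !(φ.eval v)
  | conj φ ψ => φ.eval v && ψ.eval v
  | disj φ ψ => φ.eval v || ψ.eval v
  | impl φ ψ => !(φ.eval v) || ψ.eval v
  | biim φ ψ => φ.eval v == ψ.eval v

/-- The set `L(α)` of variables occurring syntactically in a formula. -/
def vars : PropForm ν → Set ν
  | var x => {x}
  | tru => ∅
  | fls => ∅
  | neg φ => φ.vars
  | conj φ ψ => φ.vars ∪ ψ.vars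
  | disj φ ψ => φ.vars ∪ ψ.vars
  | impl φ ψ => φ.vars ∪ ψ.vars
  | biim φ ψ => φ.vars ∪ ψ.vars

end PropForm

variable {ν : Type}

/-- `α ⇔ β` : logical equivalence (α ↔ β is a tautology). -/
def Equiv (α β : PropForm ν) : Prop := ∀ v, α.eval v = β.eval v

def Tautology (α : PropForm ν) : Prop := ∀ v, α.eval v = true

def Contradiction (α : PropForm ν) : Prop := ∀ v, α.eval v = false

/-- Classical consequence `Γ ⊢ γ`. -/
def Entails (Γ : Set (PropForm ν)) (γ : PropForm ν) : Prop :=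
  ∀ v, (∀ φ ∈ Γ, φ.eval v = true) → γ.eval v = true

/-- Consistency (satisfiability) of a set of formulas. -/
def Satisfiable (Γ : Set (PropForm ν)) : Prop :=
  ∃ v, ∀ φ ∈ Γ, φ.eval v = true

/-- `V` expresses `α`: α is logically equivalent to some formula
all of whose variables lie in `V`. -/
def Expresses (V : Set ν) (α : PropForm ν) : Prop :=
  ∃ β : PropForm ν, Equiv α β ∧ β.vars ⊆ V

/-- `L_α` : the smallest language of `α` (intersection of all sets of
variables expressing `α`). -/
def Lang (α : PropForm ν) : Set ν := ⋂₀ {V : Set ν | Expresses V α}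

/-- Direct relevance (`0`-relevance): logical language overlap `L_α ∩ L_β ≠ ∅`. -/
def DirectRel (α β : PropForm ν) : Prop := (Lang α ∩ Lang β).Nonempty

/-- `k`-relevance of `α`, `β` w.r.t. the belief sequence `σ`:
there is a chain `χ_1, …, χ_k` of formulas of `σ` with
`α, χ₁` directly relevant, each `χ_i, χ_{i+1}` directly relevant,
and `χ_k, β` directly relevant (for `k = 0` this is direct relevance). -/
def KRel (k : ℕ) (α β : PropForm ν) (σ : List (PropForm ν)) : Prop :=
  ∃ l : List (PropForm ν), l.length = k ∧ (∀ χ ∈ l, χ ∈ σ) ∧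
    List.Chain' DirectRel (α :: (l ++ [β]))

/-- `rel(α,β,σ)` : the least `k` such that `α, β` are `k`-relevant w.r.t. `σ`
(`∞ = ⊤` if they are irrelevant). -/
noncomputable def relDeg (α β : PropForm ν) (σ : List (PropForm ν)) : ℕ∞ :=
  sInf {n : ℕ∞ | ∃ k : ℕ, n = (k : ℕ∞) ∧ KRel k α β σ}

open Classical in
/-- The priority ordering imposed by the query `γ` on the (indexed) entries of `σ`:
more relevant first; among equally relevant entries, more recent
(larger index) first. -/
noncomputable def priority (γ : PropForm ν) (σ : List (PropForm ν)) :
    (ℕ × PropForm ν) → (ℕ × PropForm ν) → Bool :=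
  fun a b =>
    decide (relDeg γ a.2 σ < relDeg γ b.2 σ ∨
      (relDeg γ a.2 σ = relDeg γ b.2 σ ∧ b.1 ≤ a.1))

/-- The entries `δ_1, …, δ_n` of `σ` reordered by the priority above. -/
noncomputable def prioritized (γ : PropForm ν) (σ : List (PropForm ν)) :
    List (PropForm ν) :=
  ((σ.zipIdx.map Prod.swap).mergeSort (priority γ σ)).map Prod.snd

open Classical in
/-- The prioritized maxiconsistent set `Γ_{⟨σ,k,γ⟩}` : go through `δ_1, …, δ_n`
in priority order, skipping `δ_{i+1}` if `Γ^i ⊢ ¬δ_{i+1}` or `δ_{i+1}` is not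
`k`-relevant to `γ` w.r.t. `σ`, and adding it otherwise. -/
noncomputable def Gamma (σ : List (PropForm ν)) (k : ℕ) (γ : PropForm ν) :
    Set (PropForm ν) :=
  (prioritized γ σ).foldl
    (fun Γ δ =>
      if Entails Γ (PropForm.neg δ) ∨ (k : ℕ∞) < relDeg γ δ σ then Γ
      else insert δ Γ) ∅

/-- `σ ⊢_k γ` iff `Γ_{⟨σ,k,γ⟩} ⊢ γ`. -/
def InferK (σ : List (PropForm ν)) (k : ℕ) (γ : PropForm ν) : Prop :=
  Entails (Gamma σ k γ) γ

/-- `C_k(σ) = {γ | σ ⊢_k γ}`. -/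
def Ck (σ : List (PropForm ν)) (k : ℕ) : Set (PropForm ν) :=
  {γ | InferK σ k γ}

/-- Revision `σ * γ` : concatenation of `γ` at the (most recent) end of `σ`. -/
def revise (σ : List (PropForm ν)) (γ : PropForm ν) : List (PropForm ν) :=
  σ ++ [γ]


/-! ### Auxiliary lemmas -/

lemma entails_mono {Γ Γ' : Set (PropForm ν)} (h : Γ ⊆ Γ') {γ : PropForm ν}
    (hγ : Entails Γ γ) : Entails Γ' γ :=
  fun v hv => hγ v fun φ hφ => hv φ (h hφ)

lemma directRel_congr {α β χ : PropForm ν} (h : Lang α = Lang β) :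
    DirectRel α χ ↔ DirectRel β χ := by unfold DirectRel; rw [h]

lemma krel_congr {α β : PropForm ν} (h : Lang α = Lang β)
    (k : ℕ) (δ : PropForm ν) (σ : List (PropForm ν)) :
    KRel k α δ σ ↔ KRel k β δ σ := by
  unfold KRel
  refine exists_congr fun l => and_congr_right fun _ => and_congr_right fun _ => ?_
  unfold List.Chain'
  rw [List.isChain_cons, List.isChain_cons]
  exact and_congr_left fun _ => forall_congr' fun y => imp_congr_right fun _ =>
    directRel_congr h

lemma relDeg_congr {α β : PropForm ν} (h : Lang α = Lang β)
    (δ : PropForm ν) (σ : List (PropForm ν)) :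
    relDeg α δ σ = relDeg β δ σ := by
  unfold relDeg
  congr 1
  ext n
  exact exists_congr fun m => and_congr_right fun _ => krel_congr h m δ σ

lemma krel_drop {α β δ : PropForm ν} {σ : List (PropForm ν)}
    (h : Lang α = Lang β) :
    ∀ (n : ℕ) (l : List (PropForm ν)), l.length ≤ n →
      (∀ χ ∈ l, χ ∈ σ ++ [α]) →
      List.Chain' DirectRel (β :: (l ++ [δ])) →
      ∃ l' : List (PropForm ν), l'.length ≤ l.length ∧ (∀ χ ∈ l', χ ∈ σ) ∧
        List.Chain' DirectRel (β :: (l' ++ [δ])) := by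
  intro n
  induction n with
  | zero =>
    intro l hl hmem hch
    refine ⟨l, le_rfl, ?_, hch⟩
    have : l = [] := List.length_eq_zero_iff.mp (Nat.le_zero.mp hl)
    subst this; simp
  | succ n ih =>
    intro l hl hmem hch
    by_cases hα : α ∈ l
    · obtain ⟨l₁, l₂, rfl⟩ := List.append_of_mem hα
      -- chain on β :: ((l₁ ++ α :: l₂) ++ [δ])
      have hsuf : (α :: (l₂ ++ [δ])) <:+ (β :: ((l₁ ++ α :: l₂) ++ [δ])) := by
        refine ⟨β :: l₁, ?_⟩
        simp
      have hch₂ : List.Chain' DirectRel (α :: (l₂ ++ [δ])) := hch.suffix hsuf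
      unfold List.Chain' at hch₂
      rw [List.isChain_cons] at hch₂
      have hchβ : List.Chain' DirectRel (β :: (l₂ ++ [δ])) := by
        unfold List.Chain'
        rw [List.isChain_cons]
        exact ⟨fun y hy => (directRel_congr h).mp (hch₂.1 y hy), hch₂.2⟩
      have hlen : l₂.length ≤ n := by
        have := hl
        simp [List.length_append] at this
        omega
      obtain ⟨l', hl', hmem', hch'⟩ := ih l₂ hlen
        (fun χ hχ => hmem χ (by simp [hχ])) hchβ
      refine ⟨l', ?_, hmem', hch'⟩
      simp [List.length_append]
      omega
    · refine ⟨l, le_rfl, fun χ hχ => ?_, hch⟩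
      rcases List.mem_append.mp (hmem χ hχ) with h' | h'
      · exact h'
      · simp at h'; subst h'; exact absurd hχ hα

lemma relDeg_append {α β : PropForm ν} (h : Lang α = Lang β)
    (δ : PropForm ν) (σ : List (PropForm ν)) :
    relDeg β δ (σ ++ [α]) = relDeg β δ σ := by
  unfold relDeg
  apply le_antisymm
  · apply sInf_le_sInf
    rintro n ⟨m, rfl, l, hlen, hmem, hch⟩
    exact ⟨m, rfl, l, hlen, fun χ hχ => by simp [hmem χ hχ], hch⟩
  · apply le_sInf
    rintro n ⟨m, rfl, l, hlen, hmem, hch⟩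
    obtain ⟨l', hl', hmem', hch'⟩ := krel_drop h l.length l le_rfl hmem hch
    calc sInf {n : ℕ∞ | ∃ k : ℕ, n = (k : ℕ∞) ∧ KRel k β δ σ}
        ≤ (l'.length : ℕ∞) := sInf_le ⟨l'.length, rfl, l', rfl, hmem', hch'⟩
      _ ≤ (m : ℕ∞) := by
          rw [← hlen]
          exact_mod_cast hl'

lemma relDeg_zero {α β : PropForm ν} (h : Lang α = Lang β)
    (hne : (Lang β).Nonempty) (σ : List (PropForm ν)) :
    relDeg β α σ = 0 := by
  have hk : KRel 0 β α σ := by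
    refine ⟨[], rfl, by simp, ?_⟩
    simp only [List.nil_append]
    unfold List.Chain'
    rw [List.isChain_pair]
    unfold DirectRel
    rw [h, Set.inter_self]
    exact hne
  have : (0 : ℕ∞) ∈ {n : ℕ∞ | ∃ k : ℕ, n = (k : ℕ∞) ∧ KRel k β α σ} :=
    ⟨0, by simp, hk⟩
  exact le_antisymm (sInf_le this) zero_le

lemma relDeg_top {β δ : PropForm ν} (hβ : Lang β = ∅) (σ : List (PropForm ν)) :
    relDeg β δ σ = ⊤ := by
  unfold relDeg
  refine (congrArg sInf ?_).trans sInf_empty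
  rw [Set.eq_empty_iff_forall_notMem]
  rintro n ⟨m, rfl, l, hlen, hmem, hch⟩
  unfold List.Chain' at hch
  rw [List.isChain_cons] at hch
  have h1 : (l ++ [δ]).head? = some ((l ++ [δ]).head (by simp)) :=
    List.head?_eq_head _
  have := hch.1 _ (by rw [h1]; exact rfl)
  unfold DirectRel at this
  rw [hβ, Set.empty_inter] at this
  exact Set.not_nonempty_empty this


lemma pairwise_perm_eq {A : Type} {r : A → A → Prop} :
    ∀ {l₁ l₂ : List A}, l₁.Perm l₂ → l₁.Pairwise r → l₂.Pairwise r →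
      (∀ a ∈ l₁, ∀ b ∈ l₂, r a b → r b a → a = b) → l₁ = l₂ := by
  intro l₁
  induction l₁ with
  | nil => intro l₂ hp _ _ _; exact (hp.nil_eq).symm ▸ rfl
  | cons a t₁ ih =>
    intro l₂ hp h₁ h₂ hanti
    obtain ⟨b, t₂, rfl⟩ : ∃ b t₂, l₂ = b :: t₂ := by
      cases l₂ with
      | nil => exact absurd hp.symm.nil_eq (by simp)
      | cons b t₂ => exact ⟨b, t₂, rfl⟩
    have hab : a = b := by
      have ha2 : a ∈ b :: t₂ := hp.mem_iff.mp (by simp)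
      have hb1 : b ∈ a :: t₁ := hp.mem_iff.mpr (by simp)
      rcases List.mem_cons.mp ha2 with h | ha2'
      · exact h
      rcases List.mem_cons.mp hb1 with h | hb1'
      · exact h.symm
      exact hanti a (by simp) b (by simp)
        ((List.pairwise_cons.mp h₁).1 b hb1')
        ((List.pairwise_cons.mp h₂).1 a ha2')
    subst hab
    have := ih hp.cons_inv (List.pairwise_cons.mp h₁).2 (List.pairwise_cons.mp h₂).2
      (fun x hx y hy => hanti x (by simp [hx]) y (by simp [hy]))
    rw [this]

lemma priority_trans (γ : PropForm ν) (σ : List (PropForm ν)) :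
    ∀ a b c, priority γ σ a b = true → priority γ σ b c = true →
      priority γ σ a c = true := by
  intro a b c hab hbc
  unfold priority at *
  simp only [decide_eq_true_eq] at *
  rcases hab with h1 | ⟨h1, h1'⟩ <;> rcases hbc with h2 | ⟨h2, h2'⟩
  · exact Or.inl (h1.trans h2)
  · exact Or.inl (h2 ▸ h1)
  · exact Or.inl (h1 ▸ h2)
  · exact Or.inr ⟨h1.trans h2, h2'.trans h1'⟩

lemma priority_total (γ : PropForm ν) (σ : List (PropForm ν)) :
    ∀ a b, (priority γ σ a b || priority γ σ b a) = true := by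
  intro a b
  unfold priority
  simp only [Bool.or_eq_true, decide_eq_true_eq]
  rcases lt_trichotomy (relDeg γ a.2 σ) (relDeg γ b.2 σ) with h | h | h
  · exact Or.inl (Or.inl h)
  · rcases le_total a.1 b.1 with h' | h'
    · exact Or.inr (Or.inr ⟨h.symm, h'⟩)
    · exact Or.inl (Or.inr ⟨h, h'⟩)
  · exact Or.inr (Or.inl h)

lemma priority_append {α β : PropForm ν} (h : Lang α = Lang β)
    (σ : List (PropForm ν)) :
    priority β (σ ++ [α]) = priority β σ := by
  funext a b
  unfold priority
  simp only [relDeg_append h]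

lemma prioritized_append {α β : PropForm ν} (h : Lang α = Lang β)
    (hne : (Lang β).Nonempty) (σ : List (PropForm ν)) :
    prioritized β (σ ++ [α]) = α :: prioritized β σ := by
  unfold prioritized
  rw [priority_append h]
  have henum : (σ ++ [α]).zipIdx.map Prod.swap = σ.zipIdx.map Prod.swap ++ [(σ.length, α)] := by
    simp [List.zipIdx_append]
  rw [henum]
  have key : ((σ.zipIdx.map Prod.swap) ++ [(σ.length, α)]).mergeSort (priority β σ) =
      (σ.length, α) :: (σ.zipIdx.map Prod.swap).mergeSort (priority β σ) := by
    apply pairwise_perm_eq (r := fun a b => priority β σ a b = true)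
    · exact ((List.mergeSort_perm _ _).trans
        (List.perm_append_singleton _ _)).trans
        ((List.mergeSort_perm (σ.zipIdx.map Prod.swap) (priority β σ)).symm.cons _)
    · exact List.pairwise_mergeSort (priority_trans β σ) (priority_total β σ) _
    · refine List.pairwise_cons.mpr ⟨?_, ?_⟩
      · intro b hb
        have hbmem : b ∈ (σ.zipIdx.map Prod.swap) := (List.mergeSort_perm _ _).mem_iff.mp hb
        have hblt : b.1 < σ.length := by
            obtain ⟨p, hp, rfl⟩ := List.mem_map.mp hbmem
            simpa using List.snd_lt_of_mem_zipIdx hp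
        unfold priority
        simp only [decide_eq_true_eq]
        have hα0 : relDeg β α σ = 0 := relDeg_zero h hne σ
        rcases eq_or_ne (relDeg β b.2 σ) 0 with h0 | h0
        · exact Or.inr ⟨by rw [hα0, h0], le_of_lt hblt⟩
        · exact Or.inl (by rw [hα0]; exact pos_iff_ne_zero.mpr h0)
      · exact List.pairwise_mergeSort (priority_trans β σ) (priority_total β σ) _
    · -- local antisymmetry
      intro a ha b hb hab hba
      have ha' : a ∈ (σ.zipIdx.map Prod.swap) ++ [(σ.length, α)] :=
        (List.mergeSort_perm _ _).mem_iff.mp ha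
      have hb' : b ∈ (σ.zipIdx.map Prod.swap) ++ [(σ.length, α)] := by
        rcases List.mem_cons.mp hb with h' | h'
        · rw [h']; simp
        · exact List.mem_append.mpr
            (Or.inl ((List.mergeSort_perm _ _).mem_iff.mp h'))
      have hfst : a.1 = b.1 := by
        unfold priority at hab hba
        simp only [decide_eq_true_eq] at hab hba
        rcases hab with h1 | ⟨h1, h1'⟩ <;> rcases hba with h2 | ⟨h2, h2'⟩
        · exact absurd (h1.trans h2) (lt_irrefl _)
        · rw [h2] at h1; exact absurd h1 (lt_irrefl _)
        · rw [h1] at h2; exact absurd h2 (lt_irrefl _)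
        · exact le_antisymm h2' h1'
      have hnodup : (((σ.zipIdx.map Prod.swap) ++ [(σ.length, α)]).map Prod.fst).Nodup := by
        rw [List.map_append, List.map_map]
        simp [List.nodup_append, List.nodup_range]
        refine ⟨by simpa [Function.comp_def] using List.nodup_zipIdx_map_snd σ, fun a x hx => ?_⟩
        exact Nat.ne_of_lt (by simpa using List.snd_lt_of_mem_zipIdx hx)
      exact List.inj_on_of_nodup_map hnodup ha' hb' hfst
  rw [key]
  rfl


open Classical in
noncomputable def gstep (k : ℕ) (γ : PropForm ν) (σ : List (PropForm ν)) :
    Set (PropForm ν) → PropForm ν → Set (PropForm ν) :=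
  fun Γ δ =>
    if Entails Γ (PropForm.neg δ) ∨ (k : ℕ∞) < relDeg γ δ σ then Γ
    else insert δ Γ

lemma gamma_eq (σ : List (PropForm ν)) (k : ℕ) (γ : PropForm ν) :
    Gamma σ k γ = (prioritized γ σ).foldl (gstep k γ σ) ∅ := rfl

lemma subset_gstep (k : ℕ) (γ : PropForm ν) (σ : List (PropForm ν))
    (Γ : Set (PropForm ν)) (δ : PropForm ν) : Γ ⊆ gstep k γ σ Γ δ := by
  unfold gstep
  split
  · exact subset_rfl
  · exact Set.subset_insert _ _

lemma subset_foldl (k : ℕ) (γ : PropForm ν) (σ : List (PropForm ν)) :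
    ∀ (L : List (PropForm ν)) (Γ : Set (PropForm ν)),
      Γ ⊆ L.foldl (gstep k γ σ) Γ := by
  intro L
  induction L with
  | nil => intro Γ; exact subset_rfl
  | cons δ L ih =>
    intro Γ
    exact (subset_gstep k γ σ Γ δ).trans (ih _)

lemma sat_foldl (k : ℕ) (γ : PropForm ν) (σ : List (PropForm ν)) :
    ∀ (L : List (PropForm ν)) (Γ : Set (PropForm ν)),
      Satisfiable Γ → Satisfiable (L.foldl (gstep k γ σ) Γ) := by
  intro L
  induction L with
  | nil => intro Γ h; exact h
  | cons δ L ih =>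
    intro Γ hΓ
    apply ih
    unfold gstep
    split_ifs with hc
    · exact hΓ
    · push_neg at hc
      have h1 := hc.1
      unfold Entails at h1
      push_neg at h1
      obtain ⟨v, hv, hδ⟩ := h1
      simp only [PropForm.eval] at hδ
      have hδ' : PropForm.eval v δ = true := by
        cases h' : PropForm.eval v δ
        · exact absurd (by rw [h']; rfl) hδ
        · rfl
      refine ⟨v, ?_⟩
      intro φ hφ
      rcases Set.mem_insert_iff.mp hφ with rfl | hφ
      · exact hδ'
      · exact hv φ hφ

lemma foldl_insert (k : ℕ) (γ : PropForm ν) (σ : List (PropForm ν))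
    (v : ν → Bool) {α : PropForm ν} (hαv : α.eval v = true) :
    ∀ (L : List (PropForm ν)) (Γ : Set (PropForm ν)),
      (∀ φ ∈ L.foldl (gstep k γ σ) Γ, φ.eval v = true) →
      L.foldl (gstep k γ σ) (insert α Γ) = insert α (L.foldl (gstep k γ σ) Γ) := by
  intro L
  induction L with
  | nil => intro Γ _; rfl
  | cons δ L ih =>
    intro Γ hΓ
    simp only [List.foldl_cons] at hΓ ⊢
    by_cases hg : Entails Γ (PropForm.neg δ) ∨ (k : ℕ∞) < relDeg γ δ σ
    · have h1 : gstep k γ σ Γ δ = Γ := by unfold gstep; rw [if_pos hg]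
      have hg' : Entails (insert α Γ) (PropForm.neg δ) ∨ (k : ℕ∞) < relDeg γ δ σ := by
        rcases hg with hg | hg
        · exact Or.inl (entails_mono (Set.subset_insert _ _) hg)
        · exact Or.inr hg
      have h2 : gstep k γ σ (insert α Γ) δ = insert α Γ := by
        unfold gstep; rw [if_pos hg']
      rw [h1] at hΓ
      rw [h2, h1]
      exact ih Γ hΓ
    · have h1 : gstep k γ σ Γ δ = insert δ Γ := by unfold gstep; rw [if_neg hg]
      rw [h1] at hΓ
      have hsub : insert δ Γ ⊆ L.foldl (gstep k γ σ) (insert δ Γ) :=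
        subset_foldl k γ σ L _
      have hδv : δ.eval v = true := hΓ δ (hsub (Set.mem_insert _ _))
      have hΓv : ∀ φ ∈ Γ, φ.eval v = true :=
        fun φ hφ => hΓ φ (hsub (Set.mem_insert_of_mem _ hφ))
      have hins : ∀ φ ∈ insert α Γ, φ.eval v = true := by
        intro φ hφ
        rcases Set.mem_insert_iff.mp hφ with rfl | hφ
        · exact hαv
        · exact hΓv φ hφ
      have hg' : ¬ (Entails (insert α Γ) (PropForm.neg δ) ∨
          (k : ℕ∞) < relDeg γ δ σ) := by
        push_neg at hg ⊢
        refine ⟨?_, hg.2⟩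
        intro hent
        have := hent v hins
        simp [PropForm.eval, hδv] at this
      have h2 : gstep k γ σ (insert α Γ) δ = insert δ (insert α Γ) := by
        unfold gstep; rw [if_neg hg']
      rw [h2, h1, Set.insert_comm]
      exact ih (insert δ Γ) hΓ

lemma gamma_lang_empty {β : PropForm ν} (hβ : Lang β = ∅)
    (σ : List (PropForm ν)) (k : ℕ) : Gamma σ k β = ∅ := by
  rw [gamma_eq]
  induction prioritized β σ with
  | nil => rfl
  | cons δ L ih =>
    rw [List.foldl_cons]
    have h0 : gstep k β σ ∅ δ = ∅ := by
      unfold gstep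
      rw [if_pos (Or.inr ?_)]
      rw [relDeg_top hβ]
      exact lt_top_iff_ne_top.mpr (ENat.coe_ne_top k)
    rw [h0]
    exact ih

lemma gamma_congr {α β : PropForm ν} (h : Lang α = Lang β)
    (σ : List (PropForm ν)) (k : ℕ) : Gamma σ k α = Gamma σ k β := by
  rw [gamma_eq, gamma_eq]
  have h1 : prioritized α σ = prioritized β σ := by
    unfold prioritized priority
    simp only [relDeg_congr h]
  have h2 : gstep k α σ = gstep k β σ := by
    funext Γ δ
    unfold gstep
    rw [relDeg_congr h]
  rw [h1, h2]


/-- Weak/Cautious Monotonicity: if `L_α = L_β`, `σ ⊢_k α`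
and `σ ⊢_k β`, then `σ * α ⊢_k β`. -/
theorem weak_monotonicity {ν : Type} (α β : PropForm ν)
    (hL : Lang α = Lang β) (σ : List (PropForm ν)) (k : ℕ)
    (hα : InferK σ k α) (hβ : InferK σ k β) :
    InferK (revise σ α) k β := by
  unfold InferK at hα hβ ⊢
  unfold revise
  by_cases hne : (Lang β).Nonempty
  · have hαβ : Gamma σ k α = Gamma σ k β := gamma_congr hL σ k
    rw [hαβ] at hα
    have hsat : Satisfiable (Gamma σ k β) := by
      rw [gamma_eq]
      exact sat_foldl k β σ _ _ ⟨fun _ => true, by simp⟩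
    obtain ⟨v, hv0⟩ := hsat
    have hαv : α.eval v = true := hα v hv0
    have hstep : gstep k β (σ ++ [α]) = gstep k β σ := by
      funext Γ δ
      unfold gstep
      rw [relDeg_append hL]
    have hG : Gamma (σ ++ [α]) k β = insert α (Gamma σ k β) := by
      rw [gamma_eq, hstep, prioritized_append hL hne, List.foldl_cons]
      have hc1 : ¬ Entails (∅ : Set (PropForm ν)) (PropForm.neg α) := by
        intro hent
        have := hent v (by simp)
        simp [PropForm.eval, hαv] at this
      have hc2 : ¬ ((k : ℕ∞) < relDeg β α σ) := by
        rw [relDeg_zero hL hne]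
        exact not_lt.mpr zero_le
      have h0 : gstep k β σ ∅ α = insert α ∅ := by
        unfold gstep
        rw [if_neg (not_or.mpr ⟨hc1, hc2⟩)]
      rw [h0, gamma_eq]
      exact foldl_insert k β σ v hαv _ ∅ (by rw [← gamma_eq]; exact hv0)
    rw [hG]
    exact entails_mono (Set.subset_insert _ _) hβ
  · have hβe : Lang β = ∅ := Set.not_nonempty_iff_eq_empty.mp hne
    rw [gamma_lang_empty hβe] at hβ ⊢
    exact hβ


end BeliefSeq
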